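/- For a binary set of desirable option sets K, K is coherent if and only if its corresponding set of desirable options D_K = {u : {u} ∈ K} is coherent. -/

import Mathlib

/-- Axiom K0: removal of the zero option. -/
def AxK0 {V : Type*} [AddCommGroup V] [Module ℝ V] (K : Set (Set V)) : Prop :=
  ∀ A ∈ K, A \ {0} ∈ K

/-- Axiom K1: the singleton of zero is not a desirable option set. -/
def AxK1 {V : Type*} [AddCommGroup V] [Module ℝ V] (K : Set (Set V)) : Prop :=
  ({0} : Set V) ∉ K

/-- Axiom K2: singletons of (background-)positive options are desirable option sets. -/
def AxK2 {V : Type*} [AddCommGroup V] [Module ℝ V] (Vpos : Set V) (K : Set (Set V)) : Prop :=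
  ∀ u ∈ Vpos, ({u} : Set V) ∈ K

/-- Axiom K3: closure under elementwise positive combinations of two members. -/
def AxK3 {V : Type*} [AddCommGroup V] [Module ℝ V] (K : Set (Set V)) : Prop :=
  ∀ A1 ∈ K, ∀ A2 ∈ K, ∀ l m : V → V → ℝ,
    (∀ u ∈ A1, ∀ v ∈ A2, 0 ≤ l u v ∧ 0 ≤ m u v ∧ 0 < l u v + m u v) →
    {w : V | ∃ u ∈ A1, ∃ v ∈ A2, w = l u v • u + m u v • v} ∈ K

/-- Axiom K4: upward closure under inclusion (within finite option sets). -/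
def AxK4 {V : Type*} [AddCommGroup V] [Module ℝ V] (K : Set (Set V)) : Prop :=
  ∀ A1 ∈ K, ∀ A2 : Set V, A2.Finite → A1 ⊆ A2 → A2 ∈ K

/-- Coherence of a set of desirable option sets (a subset of the finite option sets). -/
def CoherentK {V : Type*} [AddCommGroup V] [Module ℝ V] (Vpos : Set V)
    (K : Set (Set V)) : Prop :=
  (∀ A ∈ K, A.Finite) ∧ AxK0 K ∧ AxK1 K ∧ AxK2 Vpos K ∧ AxK3 K ∧ AxK4 K

/-- Coherence of a set of desirable options. -/
def CoherentD {V : Type*} [AddCommGroup V] [Module ℝ V] (Vpos D : Set V) : Prop :=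
  (0 : V) ∉ D ∧ Vpos ⊆ D ∧
  ∀ u ∈ D, ∀ v ∈ D, ∀ l m : ℝ, 0 ≤ l → 0 ≤ m → 0 < l + m → l • u + m • v ∈ D

/-- `K_D`: the binary set of desirable option sets generated by `D`. -/
def KD {V : Type*} [AddCommGroup V] [Module ℝ V] (D : Set V) : Set (Set V) :=
  {A | A.Finite ∧ (A ∩ D).Nonempty}

/-- `D_K`: the set of options whose singletons belong to `K`. -/
def DK {V : Type*} [AddCommGroup V] [Module ℝ V] (K : Set (Set V)) : Set V :=
  {u | ({u} : Set V) ∈ K}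

/-- A set of desirable option sets is binary if it is determined by singleton assessments. -/
def BinaryK {V : Type*} [AddCommGroup V] [Module ℝ V] (K : Set (Set V)) : Prop :=
  ∀ A : Set V, A.Finite → (A ∈ K ↔ ∃ u ∈ A, ({u} : Set V) ∈ K)

/-- `posi S`: all finite positive linear combinations of elements of `S`. -/
def Posi {V : Type*} [AddCommGroup V] [Module ℝ V] (S : Set V) : Set V :=
  {w | ∃ n : ℕ, 0 < n ∧ ∃ (l : Fin n → ℝ) (u : Fin n → V),
    (∀ k, 0 < l k) ∧ (∀ k, u k ∈ S) ∧ w = ∑ k, l k • u k}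

/-- Total set of desirable options. -/
def TotalD {V : Type*} [AddCommGroup V] [Module ℝ V] (Vpos D : Set V) : Prop :=
  CoherentD Vpos D ∧ ∀ u : V, u ≠ 0 → u ∈ D ∨ -u ∈ D

/-- Total set of desirable option sets. -/
def TotalK {V : Type*} [AddCommGroup V] [Module ℝ V] (Vpos : Set V)
    (K : Set (Set V)) : Prop :=
  CoherentK Vpos K ∧ ∀ u : V, u ≠ 0 → ({u, -u} : Set V) ∈ K

/-- Mixing set of desirable options. -/
def MixingD {V : Type*} [AddCommGroup V] [Module ℝ V] (Vpos D : Set V) : Prop :=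
  CoherentD Vpos D ∧ ∀ A : Set V, A.Finite → (Posi A ∩ D).Nonempty → (A ∩ D).Nonempty

/-- Mixing set of desirable option sets. -/
def MixingK {V : Type*} [AddCommGroup V] [Module ℝ V] (Vpos : Set V)
    (K : Set (Set V)) : Prop :=
  CoherentK Vpos K ∧
    ∀ A B : Set V, A.Finite → B ∈ K → A ⊆ B → B ⊆ Posi A → A ∈ K

/-- `V_{≤0}`: the non-positive options (zero together with the strictly negative options). -/
def Vneg {V : Type*} [AddCommGroup V] [Module ℝ V] (Vpos : Set V) : Set V :=
  {u | u = 0 ∨ -u ∈ Vpos}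

/-- The operator `RN`, adding smaller option sets by removing non-positive options. -/
def RN {V : Type*} [AddCommGroup V] [Module ℝ V] (Vpos : Set V)
    (K : Set (Set V)) : Set (Set V) :=
  {A | A.Finite ∧ ∃ B ∈ K, B \ Vneg Vpos ⊆ A ∧ A ⊆ B}

theorem stmt3 {V : Type*} [AddCommGroup V] [Module ℝ V]
    (Vpos : Set V) (K : Set (Set V)) (hK : ∀ A ∈ K, A.Finite)
    (hbin : BinaryK K) :
    CoherentK Vpos K ↔ CoherentD Vpos (DK K) := by
  constructor
  · rintro ⟨-, -, h1, h2, h3, -⟩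
    refine ⟨h1, fun u hu => h2 u hu, ?_⟩
    intro u hu v hv l m hl hm hlm
    have := h3 {u} hu {v} hv (fun _ _ => l) (fun _ _ => m)
      (fun _ _ _ _ => ⟨hl, hm, hlm⟩)
    have heq : {w : V | ∃ a ∈ ({u} : Set V), ∃ b ∈ ({v} : Set V),
        w = l • a + m • b} = {l • u + m • v} := by
      ext w
      simp only [Set.mem_setOf_eq, Set.mem_singleton_iff]
      constructor
      · rintro ⟨a, rfl, b, rfl, rfl⟩; rfl
      · rintro rfl; exact ⟨u, rfl, v, rfl, rfl⟩
    rwa [heq] at this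
  · rintro ⟨h0, hpos, hclos⟩
    refine ⟨hK, ?_, ?_, ?_, ?_, ?_⟩
    · -- K0
      intro A hA
      obtain ⟨u, huA, hu⟩ := (hbin A (hK A hA)).mp hA
      have hune : u ≠ 0 := fun h => h0 (h ▸ hu)
      exact (hbin _ ((hK A hA).diff (t := {0}))).mpr ⟨u, ⟨huA, hune⟩, hu⟩
    · -- K1
      intro h; exact h0 h
    · -- K2
      intro u hu; exact hpos hu
    · -- K3
      intro A1 hA1 A2 hA2 l m hlm
      obtain ⟨u, huA, hu⟩ := (hbin A1 (hK A1 hA1)).mp hA1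
      obtain ⟨v, hvA, hv⟩ := (hbin A2 (hK A2 hA2)).mp hA2
      obtain ⟨hl0, hm0, hs⟩ := hlm u huA v hvA
      have hw : l u v • u + m u v • v ∈ DK K := hclos u hu v hv _ _ hl0 hm0 hs
      have hfin : ({w : V | ∃ a ∈ A1, ∃ b ∈ A2, w = l a b • a + m a b • b}).Finite := by
        have : {w : V | ∃ a ∈ A1, ∃ b ∈ A2, w = l a b • a + m a b • b}
            = (fun p : V × V => l p.1 p.2 • p.1 + m p.1 p.2 • p.2) '' (A1 ×ˢ A2) := by
          ext w
          simp only [Set.mem_setOf_eq, Set.mem_image, Set.mem_prod, Prod.exists]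
          constructor
          · rintro ⟨a, ha, b, hb, rfl⟩; exact ⟨a, b, ⟨ha, hb⟩, rfl⟩
          · rintro ⟨a, b, ⟨ha, hb⟩, rfl⟩; exact ⟨a, ha, b, hb, rfl⟩
        rw [this]
        exact ((hK A1 hA1).prod (hK A2 hA2)).image _
      exact (hbin _ hfin).mpr ⟨_, ⟨u, huA, v, hvA, rfl⟩, hw⟩
    · -- K4
      intro A1 hA1 A2 hfin hsub
      obtain ⟨u, huA, hu⟩ := (hbin A1 (hK A1 hA1)).mp hA1
      exact (hbin A2 hfin).mpr ⟨u, hsub huA, hu⟩
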